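/- Let X and Y be N×N column-stochastic matrices and p an N-dimensional probability vector that is invariant for both, i.e., Xp = p and Yp = p. Then H_p(Y) ≤ H_p(XY) ≤ H_p(X) + H_p(Y), where H_p(T) = Σ_ν p_ν H(t_ν) is the weighted entropy of T with columns t_ν. -/

import Mathlib

open Finset

/-- Classical relative entropy `H(u‖v) = Σ_i u_i log(u_i/v_i)`;
the convention `0 · log(0/x) = 0` holds automatically in Lean. -/
noncomputable def relEnt {ι : Type*} [Fintype ι] (u v : ι → ℝ) : ℝ :=
  ∑ i, u i * Real.log (u i / v i)

/-- Shannon entropy `H(u) = -Σ_i u_i log u_i` (with `0 · log 0 = 0`). -/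
noncomputable def shEnt {ι : Type*} [Fintype ι] (u : ι → ℝ) : ℝ :=
  -∑ i, u i * Real.log (u i)

/-- A probability vector: nonnegative entries summing to 1. -/
def IsProbVec {ι : Type*} [Fintype ι] (p : ι → ℝ) : Prop :=
  (∀ i, 0 ≤ p i) ∧ ∑ i, p i = 1

/-- A column-stochastic matrix: nonnegative entries, every column sums to 1. -/
def IsColStochastic {ι : Type*} [Fintype ι] (T : Matrix ι ι ℝ) : Prop :=
  (∀ i j, 0 ≤ T i j) ∧ ∀ j, ∑ i, T i j = 1

/-- Weighted relative entropy `H_p(A‖B) = Σ_ν p_ν H(a_ν‖b_ν)` over the columns. -/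
noncomputable def wRelEnt {ι : Type*} [Fintype ι] (p : ι → ℝ) (A B : Matrix ι ι ℝ) : ℝ :=
  ∑ ν, p ν * relEnt (fun i => A i ν) (fun i => B i ν)

/-- Weighted entropy `H_p(T) = Σ_ν p_ν H(t_ν)` over the columns. -/
noncomputable def wEnt {ι : Type*} [Fintype ι] (p : ι → ℝ) (T : Matrix ι ι ℝ) : ℝ :=
  ∑ ν, p ν * shEnt (fun i => T i ν)

/- ---------- auxiliary lemmas ---------- -/

lemma aux_sub_le_mul_log_div {a b : ℝ} (ha : 0 ≤ a) (hb : 0 < b) :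
    a - b ≤ a * Real.log (a / b) := by
  rcases eq_or_lt_of_le ha with h | h
  · simp [← h]
    linarith
  · have h1 : Real.log (b / a) ≤ b / a - 1 := Real.log_le_sub_one_of_pos (by positivity)
    have h2 : Real.log (a / b) = - Real.log (b / a) := by
      rw [← Real.log_inv]
      congr 1
      field_simp
    have h3 : a * (b / a) = b := by field_simp
    rw [h2]
    nlinarith

/-- The log-sum inequality (with Lean's `x/0 = 0`, `log 0 = 0` conventions,
assuming absolute continuity `b k = 0 → a k = 0`). -/
lemma aux_logSum {ι : Type*} [Fintype ι] (a b : ι → ℝ) (ha : ∀ k, 0 ≤ a k)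
    (hb : ∀ k, 0 ≤ b k) (hab : ∀ k, b k = 0 → a k = 0) :
    (∑ k, a k) * Real.log ((∑ k, a k) / (∑ k, b k)) ≤ ∑ k, a k * Real.log (a k / b k) := by
  set A := ∑ k, a k with hA
  set B := ∑ k, b k with hB
  have hA0 : 0 ≤ A := Finset.sum_nonneg fun k _ => ha k
  rcases eq_or_lt_of_le hA0 with hA0' | hA0'
  · have hz : ∀ k ∈ Finset.univ, a k = 0 :=
      (Finset.sum_eq_zero_iff_of_nonneg (fun k _ => ha k)).1 hA0'.symm
    have : ∀ k ∈ (Finset.univ : Finset ι), a k * Real.log (a k / b k) = 0 := by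
      intro k hk; rw [hz k hk]; ring
    rw [Finset.sum_eq_zero this, ← hA0', zero_mul]
  · -- A > 0, so some a k > 0, hence the corresponding b k > 0, hence B > 0
    obtain ⟨k0, -, hk0⟩ : ∃ k ∈ Finset.univ, 0 < a k := by
      by_contra hcon
      push_neg at hcon
      have : A ≤ 0 := Finset.sum_nonpos fun k hk => hcon k hk
      linarith
    have hbk0 : 0 < b k0 := by
      rcases (hb k0).lt_or_eq with h | h
      · exact h
      · exact absurd (hab k0 h.symm) (ne_of_gt hk0)
    have hB0 : 0 < B := by
      calc (0:ℝ) < b k0 := hbk0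
        _ ≤ B := Finset.single_le_sum (fun k _ => hb k) (Finset.mem_univ k0)
    have key : ∀ k, a k - b k * (A / B) ≤
        a k * Real.log (a k / b k) - a k * Real.log (A / B) := by
      intro k
      rcases eq_or_lt_of_le (ha k) with h | h
      · rw [← h]
        have : 0 ≤ b k * (A / B) :=
          mul_nonneg (hb k) (le_of_lt (div_pos hA0' hB0))
        simp
        linarith
      · have hbk : 0 < b k := by
          rcases (hb k).lt_or_eq with h' | h'
          · exact h'
          · exact absurd (hab k h'.symm) (ne_of_gt h)
        have h1 : a k - b k * (A / B) ≤ a k * Real.log (a k / (b k * (A / B))) :=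
          aux_sub_le_mul_log_div h.le (mul_pos hbk (div_pos hA0' hB0))
        have h2 : a k / (b k * (A / B)) = (a k / b k) / (A / B) := (div_div _ _ _).symm
        have h3 : Real.log ((a k / b k) / (A / B)) =
            Real.log (a k / b k) - Real.log (A / B) :=
          Real.log_div (div_pos h hbk).ne' (div_pos hA0' hB0).ne'
        rw [h2, h3] at h1
        linarith [h1, mul_sub (a k) (Real.log (a k / b k)) (Real.log (A / B))]
    have hsum : A - B * (A / B) ≤
        ∑ k, (a k * Real.log (a k / b k) - a k * Real.log (A / B)) := by
      have := Finset.sum_le_sum (fun k (_ : k ∈ Finset.univ) => key k)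
      calc A - B * (A / B) = ∑ k, (a k - b k * (A / B)) := by
            rw [Finset.sum_sub_distrib, ← Finset.sum_mul]
        _ ≤ _ := this
    have hBA : B * (A / B) = A := by field_simp
    rw [hBA, sub_self] at hsum
    have hsplit : ∑ k, (a k * Real.log (a k / b k) - a k * Real.log (A / B)) =
        (∑ k, a k * Real.log (a k / b k)) - A * Real.log (A / B) := by
      rw [Finset.sum_sub_distrib, ← Finset.sum_mul]
    rw [hsplit] at hsum
    linarith

/-- `(x*y) log(x*y) = y (x log x) + x (y log y)` with no sign assumptions. -/
lemma aux_mul_mul_log (x y : ℝ) :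
    (x * y) * Real.log (x * y) = y * (x * Real.log x) + x * (y * Real.log y) := by
  rcases eq_or_ne x 0 with h | h
  · simp [h]
  rcases eq_or_ne y 0 with h' | h'
  · simp [h']
  rw [Real.log_mul h h']
  ring

lemma aux_mul_log_div_eq (u c : ℝ) (h : c = 0 → u = 0) :
    u * Real.log (u / c) = u * Real.log u - u * Real.log c := by
  rcases eq_or_ne u 0 with h' | h'
  · simp [h']
  have hc : c ≠ 0 := fun hc => h' (h hc)
  rw [Real.log_div h' hc]
  ring

/-- Entropy of a mixture dominates the sum of the "log" parts:
`Σ c_k log c_k ≤ (Σ c) log (Σ c)` for nonnegative `c`. -/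
lemma aux_sum_mul_log_le {ι : Type*} [Fintype ι] (c : ι → ℝ) (hc : ∀ k, 0 ≤ c k) :
    ∑ k, c k * Real.log (c k) ≤ (∑ k, c k) * Real.log (∑ k, c k) := by
  rw [Finset.sum_mul]
  apply Finset.sum_le_sum
  intro k _
  rcases eq_or_lt_of_le (hc k) with h | h
  · rw [← h]; simp
  · have hle : c k ≤ ∑ j, c j := Finset.single_le_sum (fun j _ => hc j) (Finset.mem_univ k)
    exact mul_le_mul_of_nonneg_left (Real.log_le_log h hle) (hc k)

/-- Data-processing step: applying a column-stochastic `X` with `Xp = p`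
decreases relative entropy to `p`. -/
lemma aux_relEnt_step {N : ℕ} (X : Matrix (Fin N) (Fin N) ℝ) (hX : IsColStochastic X)
    (p : Fin N → ℝ) (hp : ∀ i, 0 ≤ p i) (hXp : X.mulVec p = p)
    (v : Fin N → ℝ) (hv : ∀ k, 0 ≤ v k) (hac : ∀ k, p k = 0 → v k = 0) :
    ∑ i, (∑ k, X i k * v k) * Real.log ((∑ k, X i k * v k) / p i) ≤
      ∑ k, v k * Real.log (v k / p k) := by
  have key : ∀ i, (∑ k, X i k * v k) * Real.log ((∑ k, X i k * v k) / p i) ≤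
      ∑ k, X i k * (v k * Real.log (v k / p k)) := by
    intro i
    have hB : ∑ k, X i k * p k = p i := congrFun hXp i
    have hls := aux_logSum (fun k => X i k * v k) (fun k => X i k * p k)
      (fun k => mul_nonneg (hX.1 i k) (hv k)) (fun k => mul_nonneg (hX.1 i k) (hp k))
      (fun k hk => by
        rcases mul_eq_zero.1 hk with h | h
        · exact mul_eq_zero_of_left h _
        · exact mul_eq_zero_of_right _ (hac k h))
    rw [hB] at hls
    refine hls.trans (le_of_eq (Finset.sum_congr rfl fun k _ => ?_))
    rcases eq_or_ne (X i k) 0 with h | h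
    · simp [h]
    · rw [mul_div_mul_left _ _ h]; ring
  calc ∑ i, (∑ k, X i k * v k) * Real.log ((∑ k, X i k * v k) / p i)
      ≤ ∑ i, ∑ k, X i k * (v k * Real.log (v k / p k)) :=
        Finset.sum_le_sum fun i _ => key i
    _ = ∑ k, (∑ i, X i k) * (v k * Real.log (v k / p k)) := by
        rw [Finset.sum_comm]
        exact Finset.sum_congr rfl fun k _ => (Finset.sum_mul _ _ _).symm
    _ = ∑ k, v k * Real.log (v k / p k) := by
        refine Finset.sum_congr rfl fun k _ => ?_
        rw [hX.2 k, one_mul]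

/-- Subadditivity of the weighted entropy at a common invariant probability
vector: if `Xp = p` and `Yp = p` then `H_p(Y) ≤ H_p(XY) ≤ H_p(X) + H_p(Y)`. -/
theorem wEnt_mul_between {N : ℕ} (X Y : Matrix (Fin N) (Fin N) ℝ)
    (hX : IsColStochastic X) (hY : IsColStochastic Y)
    (p : Fin N → ℝ) (hp : IsProbVec p)
    (hXp : X.mulVec p = p) (hYp : Y.mulVec p = p) :
    wEnt p Y ≤ wEnt p (X * Y) ∧ wEnt p (X * Y) ≤ wEnt p X + wEnt p Y := by
  obtain ⟨hp0, hp1⟩ := hp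
  set Z := X * Y with hZ
  have hZentry : ∀ i ν, Z i ν = ∑ k, X i k * Y k ν := fun i ν => Matrix.mul_apply
  have hZcs : IsColStochastic Z := by
    constructor
    · intro i ν
      rw [hZentry]
      exact Finset.sum_nonneg fun k _ => mul_nonneg (hX.1 i k) (hY.1 k ν)
    · intro ν
      calc ∑ i, Z i ν = ∑ k, (∑ i, X i k) * Y k ν := by
            rw [Finset.sum_congr rfl fun i _ => hZentry i ν, Finset.sum_comm]
            exact Finset.sum_congr rfl fun k _ => (Finset.sum_mul _ _ _).symm
        _ = 1 := by
            rw [Finset.sum_congr rfl fun k _ => by rw [hX.2 k, one_mul]]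
            exact hY.2 ν
  have hZp : Z.mulVec p = p := by
    rw [hZ, ← Matrix.mulVec_mulVec, hYp, hXp]
  -- absolute continuity from invariance
  have hacgen : ∀ (T : Matrix (Fin N) (Fin N) ℝ), (∀ i j, 0 ≤ T i j) → T.mulVec p = p →
      ∀ k ν, p k = 0 → T k ν * p ν = 0 := by
    intro T hT hTp k ν hk
    have h0 : ∑ ν, T k ν * p ν = 0 := by
      have := congrFun hTp k
      rwa [hk] at this
    exact (Finset.sum_eq_zero_iff_of_nonneg
      (fun ν _ => mul_nonneg (hT k ν) (hp0 ν))).1 h0 ν (Finset.mem_univ ν)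
  -- mulVec as sums over columns weighted by p
  have hmv : ∀ (T : Matrix (Fin N) (Fin N) ℝ), T.mulVec p = p →
      ∀ i, ∑ ν, T i ν * p ν = p i := fun T hTp i => congrFun hTp i
  -- G(T) = Σ_ν Σ_i (T i ν p ν) log(T i ν p ν) = -wEnt p T + Σ p log p, for col-stochastic T
  have hG : ∀ (T : Matrix (Fin N) (Fin N) ℝ), IsColStochastic T →
      ∑ ν, ∑ i, (T i ν * p ν) * Real.log (T i ν * p ν) =
        -(wEnt p T) + ∑ ν, p ν * Real.log (p ν) := by
    intro T hT
    have hcol : ∀ ν, ∑ i, (T i ν * p ν) * Real.log (T i ν * p ν) =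
        p ν * (∑ i, T i ν * Real.log (T i ν)) + p ν * Real.log (p ν) := by
      intro ν
      calc ∑ i, (T i ν * p ν) * Real.log (T i ν * p ν)
          = ∑ i, (p ν * (T i ν * Real.log (T i ν)) + T i ν * (p ν * Real.log (p ν))) :=
            Finset.sum_congr rfl fun i _ => aux_mul_mul_log (T i ν) (p ν)
        _ = p ν * (∑ i, T i ν * Real.log (T i ν)) + (∑ i, T i ν) * (p ν * Real.log (p ν)) := by
            rw [Finset.sum_add_distrib, ← Finset.mul_sum, ← Finset.sum_mul]
        _ = _ := by rw [hT.2 ν, one_mul]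
    rw [Finset.sum_congr rfl fun ν _ => hcol ν, Finset.sum_add_distrib]
    simp only [wEnt, shEnt, mul_neg, Finset.sum_neg_distrib, neg_neg]
  -- relEnt-vs-G identity for invariant col-stochastic T
  have hRel : ∀ (T : Matrix (Fin N) (Fin N) ℝ), (∀ i j, 0 ≤ T i j) → T.mulVec p = p →
      ∑ ν, ∑ i, (T i ν * p ν) * Real.log ((T i ν * p ν) / p i) =
        (∑ ν, ∑ i, (T i ν * p ν) * Real.log (T i ν * p ν)) - ∑ i, p i * Real.log (p i) := by
    intro T hT hTp
    have hterm : ∀ ν i, (T i ν * p ν) * Real.log ((T i ν * p ν) / p i) =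
        (T i ν * p ν) * Real.log (T i ν * p ν) - (T i ν * p ν) * Real.log (p i) := by
      intro ν i
      exact aux_mul_log_div_eq _ _ (fun h => hacgen T hT hTp i ν h)
    calc ∑ ν, ∑ i, (T i ν * p ν) * Real.log ((T i ν * p ν) / p i)
        = ∑ ν, ∑ i, ((T i ν * p ν) * Real.log (T i ν * p ν)
            - (T i ν * p ν) * Real.log (p i)) := by
          exact Finset.sum_congr rfl fun ν _ => Finset.sum_congr rfl fun i _ => hterm ν i
      _ = (∑ ν, ∑ i, (T i ν * p ν) * Real.log (T i ν * p ν))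
            - ∑ ν, ∑ i, (T i ν * p ν) * Real.log (p i) := by
          rw [← Finset.sum_sub_distrib]
          exact Finset.sum_congr rfl fun ν _ => Finset.sum_sub_distrib _ _
      _ = _ := by
          congr 1
          rw [Finset.sum_comm]
          refine Finset.sum_congr rfl fun i _ => ?_
          rw [← Finset.sum_mul]
          congr 1
          exact hmv T hTp i
  constructor
  · -- lower bound : wEnt p Y ≤ wEnt p Z
    have hstep : ∀ ν, ∑ i, (Z i ν * p ν) * Real.log ((Z i ν * p ν) / p i) ≤
        ∑ k, (Y k ν * p ν) * Real.log ((Y k ν * p ν) / p k) := by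
      intro ν
      have h := aux_relEnt_step X hX p hp0 hXp (fun k => Y k ν * p ν)
        (fun k => mul_nonneg (hY.1 k ν) (hp0 ν))
        (fun k hk => hacgen Y hY.1 hYp k ν hk)
      have heq : ∀ i, ∑ k, X i k * (Y k ν * p ν) = Z i ν * p ν := by
        intro i
        rw [hZentry, Finset.sum_mul]
        exact Finset.sum_congr rfl fun k _ => (mul_assoc _ _ _).symm
      calc ∑ i, (Z i ν * p ν) * Real.log ((Z i ν * p ν) / p i)
          = ∑ i, (∑ k, X i k * (Y k ν * p ν)) *
              Real.log ((∑ k, X i k * (Y k ν * p ν)) / p i) := by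
            exact Finset.sum_congr rfl fun i _ => by rw [heq i]
        _ ≤ _ := h
    have hsum : ∑ ν, ∑ i, (Z i ν * p ν) * Real.log ((Z i ν * p ν) / p i) ≤
        ∑ ν, ∑ k, (Y k ν * p ν) * Real.log ((Y k ν * p ν) / p k) :=
      Finset.sum_le_sum fun ν _ => hstep ν
    rw [hRel Z hZcs.1 hZp, hRel Y hY.1 hYp, hG Z hZcs, hG Y hY] at hsum
    linarith
  · -- upper bound : wEnt p Z ≤ wEnt p X + wEnt p Y
    have hcol : ∀ ν, shEnt (fun i => Z i ν) ≤
        (∑ k, Y k ν * shEnt (fun i => X i k)) + shEnt (fun i => Y i ν) := by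
      intro ν
      have h1 : ∑ i, ∑ k, (X i k * Y k ν) * Real.log (X i k * Y k ν) ≤
          ∑ i, Z i ν * Real.log (Z i ν) := by
        refine Finset.sum_le_sum fun i _ => ?_
        rw [hZentry]
        exact aux_sum_mul_log_le (fun k => X i k * Y k ν)
          (fun k => mul_nonneg (hX.1 i k) (hY.1 k ν))
      have h2 : ∑ i, ∑ k, (X i k * Y k ν) * Real.log (X i k * Y k ν) =
          (∑ k, Y k ν * (∑ i, X i k * Real.log (X i k)))
            + ∑ k, Y k ν * Real.log (Y k ν) := by
        calc ∑ i, ∑ k, (X i k * Y k ν) * Real.log (X i k * Y k ν)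
            = ∑ k, ∑ i, (Y k ν * (X i k * Real.log (X i k))
                + X i k * (Y k ν * Real.log (Y k ν))) := by
              rw [Finset.sum_comm]
              exact Finset.sum_congr rfl fun k _ => Finset.sum_congr rfl fun i _ =>
                aux_mul_mul_log (X i k) (Y k ν)
          _ = ∑ k, (Y k ν * (∑ i, X i k * Real.log (X i k))
                + (∑ i, X i k) * (Y k ν * Real.log (Y k ν))) := by
              refine Finset.sum_congr rfl fun k _ => ?_
              rw [Finset.sum_add_distrib, ← Finset.mul_sum, ← Finset.sum_mul]
          _ = _ := by
              rw [Finset.sum_add_distrib]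
              congr 1
              exact Finset.sum_congr rfl fun k _ => by rw [hX.2 k, one_mul]
      rw [h2] at h1
      have : -(∑ i, Z i ν * Real.log (Z i ν)) ≤
          -((∑ k, Y k ν * (∑ i, X i k * Real.log (X i k)))
            + ∑ k, Y k ν * Real.log (Y k ν)) := neg_le_neg h1
      calc shEnt (fun i => Z i ν) = -(∑ i, Z i ν * Real.log (Z i ν)) := rfl
        _ ≤ -((∑ k, Y k ν * (∑ i, X i k * Real.log (X i k)))
            + ∑ k, Y k ν * Real.log (Y k ν)) := this
        _ = (∑ k, Y k ν * shEnt (fun i => X i k)) + shEnt (fun i => Y i ν) := by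
            simp only [shEnt, mul_neg, Finset.sum_neg_distrib]
            ring
    have hbound : wEnt p Z ≤ ∑ ν, p ν * ((∑ k, Y k ν * shEnt (fun i => X i k))
        + shEnt (fun i => Y i ν)) := by
      rw [wEnt]
      exact Finset.sum_le_sum fun ν _ =>
        mul_le_mul_of_nonneg_left (hcol ν) (hp0 ν)
    calc wEnt p Z ≤ ∑ ν, p ν * ((∑ k, Y k ν * shEnt (fun i => X i k))
          + shEnt (fun i => Y i ν)) := hbound
      _ = (∑ ν, ∑ k, p ν * Y k ν * shEnt (fun i => X i k)) + wEnt p Y := by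
          rw [wEnt, ← Finset.sum_add_distrib]
          refine Finset.sum_congr rfl fun ν _ => ?_
          rw [mul_add, Finset.mul_sum]
          congr 1
          exact Finset.sum_congr rfl fun k _ => by ring
      _ = (∑ k, p k * shEnt (fun i => X i k)) + wEnt p Y := by
          congr 1
          rw [Finset.sum_comm]
          refine Finset.sum_congr rfl fun k _ => ?_
          rw [← Finset.sum_mul]
          congr 1
          rw [← hmv Y hYp k]
          exact Finset.sum_congr rfl fun ν _ => mul_comm _ _
      _ = wEnt p X + wEnt p Y := by simp [wEnt]
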